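/- arXiv:1904.00849 — 8 statements merged into one kernel-verified Lean document; each statement's English description precedes it below -/
import Mathlib

section
/- It is impossible to have a family of measurable functions φ_t : Ω → {0,1} indexed by t ∈ [0,1], each jointly forming a measurable function in t for each fixed ω, taking values only in {0,1}, such that for almost every ω and every θ ∈ (0,1], ∫₀^θ φ_t(ω) dt = θ/2. (Feldman–Gilles impossibility.) -/
open MeasureTheory Set

/-- Feldman–Gilles impossibility: there is no family of `{0,1}`-valued random variables
`φ_t`, `t ∈ [0,1]`, measurable in `t` for each fixed `ω`, such that almost surely
`∫₀^θ φ_t(ω) dt = θ/2` for every `θ ∈ (0,1]`. -/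
theorem stmt_2 {Ω : Type*} [MeasurableSpace Ω] (P : Measure Ω) [IsProbabilityMeasure P]
    (φ : ℝ → Ω → ℝ)
    (hmeas : ∀ t, Measurable (φ t))
    (hsec : ∀ ω, Measurable fun t => φ t ω)
    (hval : ∀ t ω, φ t ω = 0 ∨ φ t ω = 1) :
    ¬ (∀ᵐ ω ∂P, ∀ θ ∈ Set.Ioc (0:ℝ) 1, ∫ t in (0:ℝ)..θ, φ t ω = θ / 2) := by
  intro hA
  have hne : (MeasureTheory.ae P).NeBot := ae_neBot.mpr (IsProbabilityMeasure.ne_zero P)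
  obtain ⟨ω, hω⟩ := hA.exists
  set f : ℝ → ℝ := fun t => φ t ω with hf
  set S : Set ℝ := {t | φ t ω = 1} with hSdef
  have hS : MeasurableSet S := (hsec ω) (measurableSet_singleton 1)
  have h_ind : ∀ t, f t = S.indicator (1 : ℝ → ℝ) t := by
    intro t
    rcases hval t ω with h | h
    · have hts : t ∉ S := by simp [hSdef, h]
      simp [hf, h, indicator_of_notMem hts]
    · have hts : t ∈ S := by simp [hSdef, h]
      simp [hf, h, indicator_of_mem hts]
  -- key measure identity
  have key : ∀ θ ∈ Set.Ioc (0:ℝ) 1, volume (S ∩ Ioc 0 θ) = ENNReal.ofReal (θ / 2) := by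
    intro θ hθ
    have h1 : ∫ t in (0:ℝ)..θ, f t = θ / 2 := hω θ hθ
    rw [intervalIntegral.integral_of_le hθ.1.le] at h1
    have h2 : ∫ t in Ioc (0:ℝ) θ, f t = ∫ t in Ioc (0:ℝ) θ, S.indicator (1 : ℝ → ℝ) t := by
      exact integral_congr_ae (Filter.Eventually.of_forall fun t => h_ind t)
    rw [h2, integral_indicator_one hS, measureReal_def, Measure.restrict_apply hS] at h1
    have hfin : volume (S ∩ Ioc (0:ℝ) θ) ≠ ⊤ :=
      ((measure_mono inter_subset_right).trans_lt measure_Ioc_lt_top).ne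
    rw [← ENNReal.ofReal_toReal hfin, h1]
  -- two measures
  set μ : Measure ℝ := volume.restrict (S ∩ Ioc 0 1) with hμ
  set ν : Measure ℝ := (2⁻¹ : ENNReal) • volume.restrict (Ioc (0:ℝ) 1) with hν
  have hμfin : IsFiniteMeasure μ := by
    constructor
    rw [hμ, Measure.restrict_apply_univ]
    exact (measure_mono inter_subset_right).trans_lt measure_Ioc_lt_top
  have hext : μ = ν := by
    refine Measure.ext_of_Iic μ ν fun a => ?_
    rw [hμ, hν, Measure.restrict_apply measurableSet_Iic, Measure.smul_apply,
      Measure.restrict_apply measurableSet_Iic, smul_eq_mul]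
    rcases le_or_gt a 0 with ha | ha
    · have e1 : Iic a ∩ Ioc (0:ℝ) 1 = ∅ := by
        ext x; simp only [mem_inter_iff, mem_Iic, mem_Ioc, mem_empty_iff_false, iff_false]
        rintro ⟨hx1, hx2, _⟩; linarith
      have e2 : Iic a ∩ (S ∩ Ioc (0:ℝ) 1) = ∅ := by
        rw [inter_comm S, ← inter_assoc, e1, empty_inter]
      rw [e1, e2]; simp
    rcases le_or_gt a 1 with ha1 | ha1
    · have e1 : Iic a ∩ Ioc (0:ℝ) 1 = Ioc 0 a := by
        ext x; simp only [mem_inter_iff, mem_Iic, mem_Ioc]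
        constructor
        · rintro ⟨h1, h2, _⟩; exact ⟨h2, h1⟩
        · rintro ⟨h1, h2⟩; exact ⟨h2, h1, h2.trans ha1⟩
      have e2 : Iic a ∩ (S ∩ Ioc (0:ℝ) 1) = S ∩ Ioc 0 a := by
        rw [inter_comm S, ← inter_assoc, e1, inter_comm]
      rw [e1, e2, key a ⟨ha, ha1⟩, Real.volume_Ioc, sub_zero]
      rw [ENNReal.ofReal_div_of_pos (by norm_num), div_eq_mul_inv, mul_comm]
      norm_num
    · have e1 : Iic a ∩ Ioc (0:ℝ) 1 = Ioc 0 1 := by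
        ext x; simp only [mem_inter_iff, mem_Iic, mem_Ioc]
        constructor
        · rintro ⟨h1, h2, h3⟩; exact ⟨h2, h3⟩
        · rintro ⟨h1, h2⟩; exact ⟨h2.trans ha1.le, h1, h2⟩
      have e2 : Iic a ∩ (S ∩ Ioc (0:ℝ) 1) = S ∩ Ioc 0 1 := by
        rw [inter_comm S, ← inter_assoc, e1, inter_comm]
      rw [e1, e2, key 1 ⟨one_pos, le_refl 1⟩, Real.volume_Ioc, sub_zero]
      rw [ENNReal.ofReal_div_of_pos (by norm_num), div_eq_mul_inv, mul_comm]
      norm_num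
  -- apply measure equality to S
  have h1 : μ S = ν S := by rw [hext]
  rw [hμ, hν, Measure.restrict_apply hS, Measure.smul_apply,
    Measure.restrict_apply hS, smul_eq_mul, ← inter_assoc, inter_self] at h1
  rw [key 1 ⟨one_pos, le_refl 1⟩] at h1
  norm_num at h1
  rw [ENNReal.ofReal_div_of_pos (by norm_num)] at h1
  norm_num at h1
  have h2 := congrArg (fun x => x * 2) h1
  simp only [mul_assoc, ENNReal.inv_mul_cancel (by norm_num : (2:ENNReal) ≠ 0) (by norm_num : (2:ENNReal) ≠ ⊤), mul_one] at h2
  exact absurd h2.symm (by norm_num)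
end

section
/- If φ : Ω × Θ → R is a rich function, then the map Ψ : E_B → 𝒫(Ω) defined by Ψ(X) = {ω : φ_ω ∈ X} (where φ_ω(θ) = φ(ω,θ)) is an injective σ-algebra homomorphism; in particular its image 𝓑 = Ψ(E_B) is a σ-algebra of subsets of Ω and Ψ : E_B → 𝓑 is a σ-algebra isomorphism. -/
open MeasureTheory Set

/-- A function `φ : Ω × Θ → R` (curried) is rich. -/
def Rich {Ω Θ R : Type*} (φ : Ω → Θ → R) : Prop :=
  ∀ h : ℕ → R,
    (∀ f : ℕ → Θ, Function.Injective f → ∃ ω, ∀ n, φ ω (f n) = h n) ∧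
    (∀ g : ℕ → Ω, Function.Injective g → ∃ θ, ∀ n, φ (g n) θ = h n)

/-- The cylinder sets in `Θ → R`. -/
def cylinderSets (Θ R : Type*) [MeasurableSpace R] : Set (Set (Θ → R)) :=
  {C | ∃ α : Θ → Set R, (∀ θ, MeasurableSet (α θ)) ∧ (∀ θ, (α θ).Nonempty) ∧
    {θ | α θ ≠ Set.univ}.Finite ∧ C = {x | ∀ θ, x θ ∈ α θ}}

/-- Every set in the σ-algebra generated by the cylinder sets depends on countably
many coordinates. -/
lemma cylinder_depends {Θ R : Type*} [MeasurableSpace R] (X : Set (Θ → R))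
    (hX : MeasurableSet[MeasurableSpace.generateFrom (cylinderSets Θ R)] X) :
    ∃ S : Set Θ, S.Countable ∧
      ∀ x y : Θ → R, (∀ θ ∈ S, x θ = y θ) → x ∈ X → y ∈ X := by
  have hX' : MeasurableSpace.GenerateMeasurable (cylinderSets Θ R) X := hX
  induction hX' with
  | basic u hu =>
      obtain ⟨α, hm, hne, hfin, rfl⟩ := hu
      refine ⟨{θ | α θ ≠ Set.univ}, hfin.countable, fun x y hxy hx θ => ?_⟩
      by_cases h : α θ = Set.univ
      · simp [h]
      · rw [← hxy θ h]; exact hx θ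
  | empty => exact ⟨∅, countable_empty, by simp⟩
  | compl u hu ih =>
      obtain ⟨S, hS, hP⟩ := ih hu
      exact ⟨S, hS, fun x y hxy hx hy =>
        hx (hP y x (fun θ hθ => (hxy θ hθ).symm) hy)⟩
  | iUnion f hf ih =>
      choose S hS hP using fun n => ih n (hf n)
      refine ⟨⋃ n, S n, countable_iUnion hS, fun x y hxy hx => ?_⟩
      obtain ⟨n, hn⟩ := mem_iUnion.1 hx
      exact mem_iUnion.2 ⟨n, hP n x y (fun θ hθ => hxy θ (mem_iUnion.2 ⟨n, hθ⟩)) hn⟩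

/-- If `φ` is rich, then `Ψ(X) = {ω | φ_ω ∈ X}` is an injective σ-algebra
homomorphism from the product σ-algebra `E_B` on `R^Θ` into `𝒫(Ω)`: it maps `univ` to
`univ`, commutes with complements and countable unions, is injective on measurable sets,
and its image `𝓑` is a σ-algebra of subsets of `Ω` (so `Ψ : E_B → 𝓑` is an
isomorphism of σ-algebras). -/
theorem stmt_3 {Ω Θ R : Type*} [MeasurableSpace R] [Infinite Θ] [Infinite Ω]
    (hR : ∃ A : Set R, MeasurableSet A ∧ A ≠ ∅ ∧ A ≠ Set.univ)
    (φ : Ω → Θ → R) (hφ : Rich φ)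
    (EB : MeasurableSpace (Θ → R))
    (hEB : EB = MeasurableSpace.generateFrom (cylinderSets Θ R))
    (Ψ : Set (Θ → R) → Set Ω) (hΨ : ∀ X, Ψ X = {ω | φ ω ∈ X}) :
    (Ψ Set.univ = Set.univ) ∧
    (∀ X, Ψ Xᶜ = (Ψ X)ᶜ) ∧
    (∀ X : ℕ → Set (Θ → R), Ψ (⋃ n, X n) = ⋃ n, Ψ (X n)) ∧
    (∀ X Y : Set (Θ → R), MeasurableSet[EB] X → MeasurableSet[EB] Y →
      Ψ X = Ψ Y → X = Y) ∧
    (∃ m : MeasurableSpace Ω,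
      ∀ s : Set Ω, MeasurableSet[m] s ↔ ∃ X, MeasurableSet[EB] X ∧ s = Ψ X) := by
  subst hEB
  -- key subset lemma for injectivity
  have key : ∀ X Y : Set (Θ → R),
      MeasurableSet[MeasurableSpace.generateFrom (cylinderSets Θ R)] X →
      MeasurableSet[MeasurableSpace.generateFrom (cylinderSets Θ R)] Y →
      Ψ X = Ψ Y → X ⊆ Y := by
    intro X Y hX hY hXY x hx
    by_contra hy
    obtain ⟨S₁, hS₁, hP₁⟩ := cylinder_depends X hX
    obtain ⟨S₂, hS₂, hP₂⟩ := cylinder_depends Yᶜ hY.compl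
    set S : Set Θ := S₁ ∪ S₂ ∪ Set.range (Infinite.natEmbedding Θ) with hSdef
    have hScnt : S.Countable :=
      ((hS₁.union hS₂).union (Set.countable_range _))
    have hSinf : S.Infinite :=
      (Set.infinite_range_of_injective (Infinite.natEmbedding Θ).injective).mono
        (Set.subset_union_right)
    haveI : Countable ↥S := hScnt.to_subtype
    haveI : Infinite ↥S := hSinf.to_subtype
    obtain ⟨d⟩ := nonempty_denumerable ↥S
    let e : ↥S ≃ ℕ := @Denumerable.eqv ↥S d
    let f : ℕ → Θ := fun n => (e.symm n : Θ)
    have hfinj : Function.Injective f :=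
      Subtype.val_injective.comp e.symm.injective
    obtain ⟨ω, hω⟩ := (hφ (fun n => x (f n))).1 f hfinj
    have hag : ∀ θ ∈ S, φ ω θ = x θ := by
      intro θ hθ
      have := hω (e ⟨θ, hθ⟩)
      simpa [f, e] using this
    have hXmem : φ ω ∈ X :=
      hP₁ x (φ ω) (fun θ hθ => (hag θ (Or.inl (Or.inl hθ))).symm) hx
    have hYc : φ ω ∈ Yᶜ :=
      hP₂ x (φ ω) (fun θ hθ => (hag θ (Or.inl (Or.inr hθ))).symm) hy
    have hΨX : ω ∈ Ψ X := by rw [hΨ]; exact hXmem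
    have hΨY : ω ∈ Ψ Y := hXY ▸ hΨX
    rw [hΨ] at hΨY
    exact hYc hΨY
  refine ⟨by rw [hΨ]; rfl, fun X => by rw [hΨ, hΨ]; rfl,
    fun X => by ext ω; simp [hΨ],
    fun X Y hX hY h => Set.Subset.antisymm (key X Y hX hY h) (key Y X hY hX h.symm),
    ?_⟩
  refine ⟨MeasurableSpace.comap (fun ω => φ ω)
    (MeasurableSpace.generateFrom (cylinderSets Θ R)), fun s => ?_⟩
  constructor
  · rintro ⟨t, ht, rfl⟩
    exact ⟨t, ht, by rw [hΨ]; rfl⟩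
  · rintro ⟨X, hX, rfl⟩
    exact ⟨X, hX, by rw [hΨ]; rfl⟩
end

section
/- If φ : Ω × Θ → R is a rich function, then for every r ∈ R and every ω ∈ Ω, the set {θ ∈ Θ : φ(ω, θ) = r} has cardinality at least 2^ℵ₀. -/
open Cardinal

/-- If `φ` is rich, then for every `r ∈ R` and `ω ∈ Ω` the fiber
`{θ | φ(ω,θ) = r}` has cardinality at least `2^ℵ₀`. -/
theorem stmt_4 {Ω Θ R : Type*} [Nontrivial R] [Infinite Θ] [Infinite Ω]
    (φ : Ω → Θ → R) (hφ : Rich φ) (r : R) (ω : Ω) :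
    (2 : Cardinal) ^ Cardinal.aleph0 ≤ Cardinal.mk {θ : Θ // φ ω θ = r} := by
  obtain ⟨r', hr'⟩ := exists_ne r
  have hinf : Infinite {x : Ω // x ≠ ω} :=
    ((Set.finite_singleton ω).infinite_compl).to_subtype
  obtain ⟨e⟩ : Nonempty (ℕ ↪ {x : Ω // x ≠ ω}) := ⟨Infinite.natEmbedding _⟩
  let g : ℕ → Ω := fun n => match n with | 0 => ω | Nat.succ k => (e k).1
  have hginj : Function.Injective g := by
    intro a b hab
    match a, b with
    | 0, 0 => rfl
    | 0, Nat.succ k => exact absurd hab.symm (e k).2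
    | Nat.succ k, 0 => exact absurd hab (e k).2
    | Nat.succ j, Nat.succ k =>
      have : e j = e k := Subtype.ext hab
      simp [e.injective this]
  have key : ∀ b : ℕ → Bool, ∃ θ, φ ω θ = r ∧
      ∀ n, φ (g (n+1)) θ = (if b n then r else r') := by
    intro b
    obtain ⟨θ, hθ⟩ := (hφ (fun n => match n with
      | 0 => r | Nat.succ k => if b k then r else r')).2 g hginj
    exact ⟨θ, hθ 0, fun n => hθ (n+1)⟩
  choose F hF1 hF2 using key
  have hinj : Function.Injective
      (fun b => (⟨F b, hF1 b⟩ : {θ : Θ // φ ω θ = r})) := by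
    intro b b' hbb
    have hFb : F b = F b' := congrArg Subtype.val hbb
    funext n
    have h1 := hF2 b n
    rw [hFb, hF2 b' n] at h1
    by_cases hb : b n <;> by_cases hb' : b' n <;> simp_all
  have h2 := Cardinal.lift_mk_le'.2 ⟨⟨_, hinj⟩⟩
  have h3 : Cardinal.mk (ℕ → Bool) = (2 : Cardinal) ^ Cardinal.aleph0 := by
    rw [← Cardinal.mk_bool, ← Cardinal.mk_nat, Cardinal.power_def]
  rw [h3, Cardinal.lift_uzero] at h2
  simpa using h2
end

section
/- Suppose S : τ → P is a fully specified sequence of partial functions from Ω × Θ to R: S is nested (ρ < σ < τ implies S(ρ) ⊆ S(σ)) and for every σ < τ, S(σ+1) forces the feature N(σ), where N : τ → T is a surjective enumeration of all features. Then φ = ⋃_{σ<τ} S(σ) is a well-defined total function Ω × Θ → R and is rich. -/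
universe u

/-- The set of features
`T = {(h,f) ∈ R^ℕ × Θ^ℕ : f injective} ∪ {(h,g) ∈ R^ℕ × Ω^ℕ : g injective} ∪ (Ω × Θ)`. -/
def Feature (Ω Θ R : Type u) : Type u :=
  {p : (ℕ → R) × (ℕ → Θ) // Function.Injective p.2} ⊕
  {p : (ℕ → R) × (ℕ → Ω) // Function.Injective p.2} ⊕ (Ω × Θ)

/-- A partial function `p : Ω × Θ ⇀ R`, encoded via `Option`, forces a feature. -/
def Forces {Ω Θ R : Type u} (p : Ω → Θ → Option R) : Feature Ω Θ R → Prop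
  | Sum.inl ⟨(h, f), _⟩ => ∃ ω, ∀ n, p ω (f n) = some (h n)
  | Sum.inr (Sum.inl ⟨(h, g), _⟩) => ∃ θ, ∀ n, p (g n) θ = some (h n)
  | Sum.inr (Sum.inr (ω, θ)) => ∃ r, p ω θ = some r

/-- One partial function extends another. -/
def Extends {Ω Θ R : Type u} (p q : Ω → Θ → Option R) : Prop :=
  ∀ ω θ r, p ω θ = some r → q ω θ = some r

/-- If `S : τ → P` is a fully specified nested sequence of partial functions forcing,
at each successor stage, the corresponding feature of a surjective enumeration `N` of
all features, then `φ = ⋃_{σ<τ} S(σ)` is a well-defined total function `Ω × Θ → R`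
and is rich. -/
theorem stmt_8 {Ω Θ R : Type u} (τ : Ordinal.{u})
    (hτlim : ∀ σ, σ < τ → σ + 1 < τ)
    (S : Ordinal.{u} → (Ω → Θ → Option R))
    (N : Ordinal.{u} → Feature Ω Θ R)
    (hN : ∀ x : Feature Ω Θ R, ∃ σ, σ < τ ∧ N σ = x)
    (hnested : ∀ ρ σ, ρ < σ → σ < τ → Extends (S ρ) (S σ))
    (hforce : ∀ σ, σ < τ → Forces (S (σ + 1)) (N σ)) :
    ∃ φ : Ω → Θ → R,
      (∀ ω θ, ∃ σ, σ < τ ∧ S σ ω θ = some (φ ω θ)) ∧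
      (∀ σ, σ < τ → Extends (S σ) (fun ω θ => some (φ ω θ))) ∧
      Rich φ := by
  classical
  -- agreement lemma
  have agree : ∀ σ₁ σ₂ ω θ r₁ r₂, σ₁ < τ → σ₂ < τ →
      S σ₁ ω θ = some r₁ → S σ₂ ω θ = some r₂ → r₁ = r₂ := by
    intro σ₁ σ₂ ω θ r₁ r₂ h₁ h₂ e₁ e₂
    rcases lt_trichotomy σ₁ σ₂ with h | h | h
    · have := hnested σ₁ σ₂ h h₂ ω θ r₁ e₁
      rw [this] at e₂; exact (Option.some_injective _ e₂)
    · subst h; rw [e₁] at e₂; exact Option.some_injective _ e₂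
    · have := hnested σ₂ σ₁ h h₁ ω θ r₂ e₂
      rw [this] at e₁; exact (Option.some_injective _ e₁).symm
  have total : ∀ ω θ, ∃ σ r, σ < τ ∧ S σ ω θ = some r := by
    intro ω θ
    obtain ⟨σ, hσ, hNσ⟩ := hN (Sum.inr (Sum.inr (ω, θ)))
    have hf := hforce σ hσ
    rw [hNσ] at hf
    obtain ⟨r, hr⟩ := hf
    exact ⟨σ + 1, r, hτlim σ hσ, hr⟩
  choose σ0 r0 hσ0 hr0 using total
  refine ⟨fun ω θ => r0 ω θ, fun ω θ => ⟨σ0 ω θ, hσ0 ω θ, hr0 ω θ⟩, ?_, ?_⟩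
  · intro σ hσ ω θ r hr
    exact congrArg some (agree σ (σ0 ω θ) ω θ r (r0 ω θ) hσ (hσ0 ω θ) hr (hr0 ω θ)).symm
  · intro h
    constructor
    · intro f hf
      obtain ⟨σ, hσ, hNσ⟩ := hN (Sum.inl ⟨(h, f), hf⟩)
      have hfo := hforce σ hσ
      rw [hNσ] at hfo
      obtain ⟨ω, hω⟩ := hfo
      refine ⟨ω, fun n => ?_⟩
      exact agree (σ0 ω (f n)) (σ + 1) ω (f n) _ (h n) (hσ0 ω (f n)) (hτlim σ hσ)
        (hr0 ω (f n)) (hω n)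
    · intro g hg
      obtain ⟨σ, hσ, hNσ⟩ := hN (Sum.inr (Sum.inl ⟨(h, g), hg⟩))
      have hfo := hforce σ hσ
      rw [hNσ] at hfo
      obtain ⟨θ, hθ⟩ := hfo
      refine ⟨θ, fun n => ?_⟩
      exact agree (σ0 (g n) θ) (σ + 1) (g n) θ _ (h n) (hσ0 (g n) θ) (hτlim σ hσ)
        (hr0 (g n) θ) (hθ n)
end

section
/- If Φ = (Ω, Θ, φ) is a homogeneous sample-distribution limit for (R, 𝓡, μ) and 𝓡 contains a set B with 0 < μ(B) < 1, then the population measure ν on (Θ, 𝓕) is nonatomic: every A ∈ 𝓕 with ν(A) > 0 has a measurable subset of strictly smaller positive measure. -/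
open MeasureTheory Set

/-- If `(Ω,Θ,φ)` is a homogeneous sample-distribution limit for `(R,𝓡,μ)` and `𝓡`
contains a set of `μ`-measure strictly between `0` and `1`, then the population
measure `ν` is nonatomic: every measurable set of positive measure has a measurable
subset of strictly smaller positive measure. -/
theorem stmt_9 {Ω Θ R : Type*}
    [MeasurableSpace Ω] [MeasurableSpace Θ] [mR : MeasurableSpace R]
    (π : Measure Ω) [IsProbabilityMeasure π]
    (ν : Measure Θ) [IsProbabilityMeasure ν]
    (μ : Measure R) [IsProbabilityMeasure μ]
    (φ : Ω → Θ → R)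
    -- (a) the sections `φ_θ` are i.i.d. with distribution `μ`:
    (hmeas : ∀ θ, Measurable fun ω => φ ω θ)
    (hindep : ProbabilityTheory.iIndepFun (fun θ ω => φ ω θ) π)
    (hdist : ∀ θ, Measure.map (fun ω => φ ω θ) π = μ)
    -- (b) a.s. the sample functions are measurable with distribution `μ`:
    (hsample : ∀ᵐ ω ∂π, Measurable (φ ω) ∧ Measure.map (φ ω) ν = μ)
    -- homogeneity:
    (hhom : ∀ A : Set Θ, MeasurableSet A → ∀ B : Set R, MeasurableSet B →
      ∀ᵐ ω ∂π, ν (A ∩ (φ ω) ⁻¹' B) = ν A * μ B)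
    -- `𝓡` contains a set of measure strictly between 0 and 1:
    (hB : ∃ B : Set R, MeasurableSet B ∧ 0 < μ B ∧ μ B < 1) :
    ∀ A : Set Θ, MeasurableSet A → 0 < ν A →
      ∃ A' : Set Θ, A' ⊆ A ∧ MeasurableSet A' ∧ 0 < ν A' ∧ ν A' < ν A := by
  intro A hA hApos
  obtain ⟨B, hBm, hB0, hB1⟩ := hB
  have h := (hhom A hA B hBm).and hsample
  obtain ⟨ω, hω1, hω2, _⟩ := h.exists
  refine ⟨A ∩ (φ ω) ⁻¹' B, inter_subset_left, hA.inter (hω2 hBm), ?_, ?_⟩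
  · rw [hω1]; exact ENNReal.mul_pos hApos.ne' hB0.ne'
  · rw [hω1]
    calc ν A * μ B < ν A * 1 := by
          exact ENNReal.mul_lt_mul_right hApos.ne' (measure_ne_top ν A) hB1
      _ = ν A := mul_one _
end

section
/- Suppose (Ω,𝓑,π), (Θ,𝓕,ν), (R,𝓡,μ) are probability spaces and φ : Ω × Θ → R is such that the sections φ_θ are independent with common distribution μ, φ is homogeneous (ν(A ∩ φ_ω⁻¹(B)) = ν(A)μ(B) a.s. for all A ∈ 𝓕, B ∈ 𝓡), and 𝓡 contains a set A with 0 < μ(A) < 1. Then φ is not measurable with respect to the product σ-algebra 𝓑 × 𝓕. -/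
open MeasureTheory Set

theorem aux_measurableSet_generateFrom_countable {α : Type*} {s : Set (Set α)} {t : Set α}
    (ht : MeasurableSet[MeasurableSpace.generateFrom s] t) :
    ∃ u, u ⊆ s ∧ u.Countable ∧ MeasurableSet[MeasurableSpace.generateFrom u] t := by
  let m' : MeasurableSpace α :=
    { MeasurableSet' := fun t => ∃ u, u ⊆ s ∧ u.Countable ∧
        MeasurableSet[MeasurableSpace.generateFrom u] t
      measurableSet_empty := ⟨∅, by simp, countable_empty, @MeasurableSet.empty _ (MeasurableSpace.generateFrom ∅)⟩
      measurableSet_compl := fun t h => by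
        obtain ⟨u, hus, huc, hut⟩ := h
        exact ⟨u, hus, huc, hut.compl⟩
      measurableSet_iUnion := fun f hf => by
        choose u hus huc hut using hf
        exact ⟨⋃ n, u n, iUnion_subset hus, countable_iUnion huc,
          MeasurableSet.iUnion fun n =>
            MeasurableSpace.generateFrom_mono (subset_iUnion u n) _ (hut n)⟩ }
  have hle : MeasurableSpace.generateFrom s ≤ m' :=
    MeasurableSpace.generateFrom_le fun v hv =>
      ⟨{v}, singleton_subset_iff.2 hv, countable_singleton v,
        MeasurableSpace.measurableSet_generateFrom rfl⟩
  exact hle t ht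

/-- Nonmeasurability of a homogeneous sample-distribution limit: if the sections `φ_θ`
are independent with common distribution `μ`, `φ` is homogeneous, and `𝓡` contains a
set of `μ`-measure strictly between `0` and `1`, then `φ` is not measurable with
respect to the product σ-algebra `𝓑 ⊗ 𝓕`. -/
theorem stmt_10 {Ω Θ R : Type*}
    [MeasurableSpace Ω] [MeasurableSpace Θ] [mR : MeasurableSpace R]
    (π : Measure Ω) [IsProbabilityMeasure π]
    (ν : Measure Θ) [IsProbabilityMeasure ν]
    (μ : Measure R) [IsProbabilityMeasure μ]
    (φ : Ω → Θ → R)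
    (hmeasθ : ∀ θ, Measurable fun ω => φ ω θ)
    (hmeasω : ∀ ω, Measurable (φ ω))
    (hindep : ProbabilityTheory.iIndepFun (fun θ ω => φ ω θ) π)
    (hdist : ∀ θ, Measure.map (fun ω => φ ω θ) π = μ)
    (hhom : ∀ A : Set Θ, MeasurableSet A → ∀ B : Set R, MeasurableSet B →
      ∀ᵐ ω ∂π, ν (A ∩ (φ ω) ⁻¹' B) = ν A * μ B)
    (hA : ∃ A : Set R, MeasurableSet A ∧ 0 < μ A ∧ μ A < 1) :
    ¬ Measurable (fun p : Ω × Θ => φ p.1 p.2) := by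
  classical
  obtain ⟨A, hAm, ha0, ha1⟩ := hA
  intro hφ
  set a := μ A with ha_def
  have haT : a ≠ ⊤ := (lt_of_lt_of_le ha1 le_top).ne
  -- the preimage set
  set S : Set (Ω × Θ) := (fun p : Ω × Θ => φ p.1 p.2) ⁻¹' A with hS_def
  have hSm : MeasurableSet S := hφ hAm
  -- S is measurable w.r.t. the σ-algebra generated by countably many rectangles
  have hSgen : MeasurableSet[MeasurableSpace.generateFrom
      (image2 (· ×ˢ ·) { s : Set Ω | MeasurableSet s } { t : Set Θ | MeasurableSet t })] S := by
    rwa [generateFrom_prod]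
  obtain ⟨u, hus, huc, huS⟩ := aux_measurableSet_generateFrom_countable hSgen
  -- enumerate the rectangles (adding a trivial one for nonemptiness)
  set u' : Set (Set (Ω × Θ)) := insert ((univ : Set Ω) ×ˢ (univ : Set Θ)) u with hu'_def
  have hu'c : u'.Countable := huc.insert _
  have hu's : u' ⊆ image2 (· ×ˢ ·) { s : Set Ω | MeasurableSet s } { t : Set Θ | MeasurableSet t } := by
    refine insert_subset_iff.2 ⟨?_, hus⟩
    exact mem_image2_of_mem MeasurableSet.univ MeasurableSet.univ
  obtain ⟨e, he⟩ := hu'c.exists_eq_range (insert_nonempty _ _)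
  have he_mem : ∀ n, e n ∈ image2 (· ×ˢ ·) { s : Set Ω | MeasurableSet s }
      { t : Set Θ | MeasurableSet t } := fun n => hu's (he ▸ mem_range_self n)
  choose B hBm F hFm heq using fun n => he_mem n
  have hBm' : ∀ n, MeasurableSet (B n) := hBm
  have hFm' : ∀ n, MeasurableSet (F n) := hFm
  -- the countably generated sub-σ-algebra on Θ
  have hm2le : MeasurableSpace.generateFrom (range F) ≤ ‹MeasurableSpace Θ› :=
    MeasurableSpace.generateFrom_le (by rintro _ ⟨n, rfl⟩; exact hFm' n)
  -- S is measurable w.r.t. 𝓑 ⊗ m2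
  have hSm2 : MeasurableSet[@Prod.instMeasurableSpace Ω Θ ‹_› (MeasurableSpace.generateFrom (range F))] S := by
    have h1 : MeasurableSpace.generateFrom u ≤ @Prod.instMeasurableSpace Ω Θ ‹_› (MeasurableSpace.generateFrom (range F)) := by
      refine MeasurableSpace.generateFrom_le fun v hv => ?_
      have hv' : v ∈ range e := he ▸ mem_insert_of_mem _ hv
      obtain ⟨n, rfl⟩ := hv'
      rw [← heq n]
      exact @MeasurableSet.prod Ω Θ ‹_› (MeasurableSpace.generateFrom (range F)) _ _ (hBm' n)
        (MeasurableSpace.measurableSet_generateFrom (mem_range_self n))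
    exact h1 S huS
  -- sections are m2-measurable
  have hsec : ∀ ω, MeasurableSet[MeasurableSpace.generateFrom (range F)] (φ ω ⁻¹' A) := by
    intro ω
    have := (@measurable_prodMk_left Ω Θ ‹_› (MeasurableSpace.generateFrom (range F)) ω) hSm2
    simpa [hS_def, preimage_preimage] using this
  -- countable π-system generating m2
  set P : Set (Set Θ) := piiUnionInter (fun k => ({F k} : Set (Set Θ))) (univ : Set ℕ) with hP_def
  have hPpi : IsPiSystem P :=
    isPiSystem_piiUnionInter _ (fun k => IsPiSystem.singleton (F k)) _
  have hPc : P.Countable := by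
    rw [hP_def, piiUnionInter_singleton_left]
    have : { s' : Set Θ | ∃ (t : Finset ℕ) (_ : ↑t ⊆ (univ : Set ℕ)), s' = ⋂ i ∈ t, F i } ⊆
        range (fun t : Finset ℕ => ⋂ i ∈ t, F i) := by
      rintro s' ⟨t, -, rfl⟩
      exact mem_range_self t
    exact (countable_range _).mono this
  have hPgen : MeasurableSpace.generateFrom (range F) = MeasurableSpace.generateFrom P := by
    rw [hP_def, generateFrom_piiUnionInter_singleton_left]
    congr 1
    ext v
    simp [eq_comm]
  have hPmeas : ∀ G ∈ P, MeasurableSet G := by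
    intro G hG
    exact hm2le G (hPgen ▸ MeasurableSpace.measurableSet_generateFrom hG)
  -- find a good ω
  have hgood : ∀ᵐ ω ∂π, (∀ G ∈ P, ν (G ∩ φ ω ⁻¹' A) = ν G * a) ∧
      ν (univ ∩ φ ω ⁻¹' A) = ν univ * a := by
    refine Filter.Eventually.and ?_ (hhom univ MeasurableSet.univ A hAm)
    exact (ae_ball_iff hPc).2 fun G hG => hhom G (hPmeas G hG) A hAm
  obtain ⟨ω₀, hω₀P, hω₀u⟩ := hgood.exists
  set T : Set Θ := φ ω₀ ⁻¹' A with hT_def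
  have hTm2 : MeasurableSet[MeasurableSpace.generateFrom (range F)] T := hsec ω₀
  have hTm : MeasurableSet T := hm2le T hTm2
  have hνT : ν T = a := by simpa using hω₀u
  -- Dynkin argument: ν (t ∩ T) = ν t * a for all t ∈ m2
  have key : ∀ ⦃t : Set Θ⦄, MeasurableSet[MeasurableSpace.generateFrom (range F)] t →
      ν (t ∩ T) = ν t * a := by
    refine MeasurableSpace.induction_on_inter (m := MeasurableSpace.generateFrom (range F))
      hPgen hPpi ?_ ?_ ?_ ?_
    · simp
    · exact fun t ht => hω₀P t ht
    · intro t ht hνt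
      have htm : MeasurableSet t := hm2le t ht
      have hsplit : ν (t ∩ T) + ν (tᶜ ∩ T) = ν T := by
        have h := measure_inter_add_diff (μ := ν) T htm
        rwa [inter_comm T t, diff_eq_compl_inter] at h
      have hcompl : ν tᶜ = 1 - ν t := by
        rw [measure_compl htm (measure_ne_top ν t), measure_univ]
      have hνt_le : ν t ≤ 1 := prob_le_one
      have : ν (tᶜ ∩ T) = a - ν t * a := by
        rw [hνT] at hsplit
        rw [hνt] at hsplit
        exact ENNReal.eq_sub_of_add_eq (by
            exact ENNReal.mul_ne_top (measure_ne_top ν t) haT)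
          (by rw [add_comm]; exact hsplit)
      rw [this, hcompl, ENNReal.sub_mul (fun _ _ => haT), one_mul]
    · intro f hdisj hfm hf
      have hfm' : ∀ i, MeasurableSet (f i) := fun i => hm2le _ (hfm i)
      have h1 : (⋃ i, f i) ∩ T = ⋃ i, f i ∩ T := iUnion_inter T f
      rw [h1, measure_iUnion
          (fun i j hij => Disjoint.mono inter_subset_left inter_subset_left (hdisj hij))
          (fun i => (hfm' i).inter hTm),
        measure_iUnion hdisj hfm']
      simp_rw [hf]
      rw [ENNReal.tsum_mul_right]
  -- contradiction
  have : a = a * a := by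
    have := key hTm2
    rwa [inter_self, hνT] at this
  have h1a : (1 : ENNReal) = a :=
    (ENNReal.mul_right_inj (ne_of_gt ha0) haT).1 (by rw [mul_one, ← this])
  exact absurd (h1a ▸ ha1) (lt_irrefl _)
end

section
/- Let 𝓔 be the σ-algebra of countable and co-countable subsets of [0,1], and ε the measure with ε(A) = 0 if A is countable and ε(A) = 1 if [0,1]\A is countable. Then ε is a probability measure on 𝓔, and any injective function φ : [0,1] × [0,1] → [0,1] is measurable with respect to the product σ-algebra 𝓔 ⊗ 𝓔 (with target σ-algebra 𝓔). -/
open MeasureTheory Set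
open scoped Classical

/-- The countable–cocountable σ-algebra on a type. -/
def cocountableSigmaAlgebra (X : Type*) : MeasurableSpace X where
  MeasurableSet' s := s.Countable ∨ sᶜ.Countable
  measurableSet_empty := Or.inl Set.countable_empty
  measurableSet_compl s h := by
    rcases h with h | h
    · exact Or.inr (by simpa using h)
    · exact Or.inl h
  measurableSet_iUnion f h := by
    by_cases hc : ∀ n, (f n).Countable
    · exact Or.inl (Set.countable_iUnion hc)
    · push_neg at hc
      obtain ⟨n, hn⟩ := hc
      rcases h n with h' | h'
      · exact absurd h' hn
      · refine Or.inr (h'.mono ?_)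
        rw [Set.compl_iUnion]
        exact Set.iInter_subset _ n

lemma aux_unc : Uncountable (Set.Icc (0:ℝ) 1) := by
  rw [← Cardinal.aleph0_lt_mk_iff, Cardinal.mk_Icc_real one_pos]
  exact Cardinal.aleph0_lt_continuum

section aux
variable {X : Type*} [Uncountable X]

omit [Uncountable X] in
lemma aux_meas (s : Set X) (hs : s.Countable) :
    @MeasurableSet X (cocountableSigmaAlgebra X) s := Or.inl hs

/-- The countable-or-cocountable measure. -/
noncomputable def cocMeasure : @Measure X (cocountableSigmaAlgebra X) :=
  @Measure.ofMeasurable X (cocountableSigmaAlgebra X)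
    (fun s _ => if s.Countable then 0 else 1)
    (by simp [Set.countable_empty])
    (by
      intro f hf hd
      by_cases hc : ∀ i, (f i).Countable
      · simp only [hc, if_pos, Set.countable_iUnion hc, if_pos, tsum_zero]
      · push_neg at hc
        obtain ⟨n, hn⟩ := hc
        have hcompl : (f n)ᶜ.Countable := (hf n).resolve_left hn
        have hU : ¬ (⋃ i, f i).Countable := fun h =>
          hn (h.mono (Set.subset_iUnion f n))
        have hothers : ∀ i ≠ n, (f i).Countable := fun i hi =>
          hcompl.mono (Set.subset_compl_iff_disjoint_right.mpr (hd hi))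
        beta_reduce
        rw [if_neg hU, tsum_eq_single n (fun i hi => by simp [hothers i hi])]
        simp [hn])

omit [Uncountable X] in
lemma cocMeasure_apply (s : Set X)
    (hs : @MeasurableSet X (cocountableSigmaAlgebra X) s) :
    cocMeasure s = if s.Countable then 0 else 1 :=
  @Measure.ofMeasurable_apply X (cocountableSigmaAlgebra X) _ _ _ s hs

lemma cocMeasure_countable (s : Set X) (hs : s.Countable) :
    (cocMeasure : @Measure X (cocountableSigmaAlgebra X)) s = 0 := by
  rw [cocMeasure_apply s (Or.inl hs), if_pos hs]

lemma cocMeasure_cocountable (s : Set X) (hs : sᶜ.Countable) :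
    (cocMeasure : @Measure X (cocountableSigmaAlgebra X)) s = 1 := by
  have hnc : ¬ s.Countable := by
    intro h
    exact (not_countable_univ (α := X)) (by
      simpa [Set.union_compl_self] using h.union hs)
  rw [cocMeasure_apply s (Or.inr hs), if_neg hnc]

end aux

/-- On `[0,1]` with the countable–cocountable σ-algebra `𝓔`, the set function `ε`
(`0` on countable sets, `1` on co-countable sets) is a probability measure, and any
injective `φ : [0,1] × [0,1] → [0,1]` is measurable for the product σ-algebra
`𝓔 ⊗ 𝓔` (with target `𝓔`). -/
theorem stmt_11 :
    (∃ ε : @Measure (Set.Icc (0:ℝ) 1) (cocountableSigmaAlgebra _),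
      (∀ A : Set (Set.Icc (0:ℝ) 1), A.Countable → ε A = 0) ∧
      (∀ A : Set (Set.Icc (0:ℝ) 1), Aᶜ.Countable → ε A = 1) ∧
      @IsProbabilityMeasure _ (cocountableSigmaAlgebra _) ε) ∧
    (∀ φ : (Set.Icc (0:ℝ) 1) × (Set.Icc (0:ℝ) 1) → Set.Icc (0:ℝ) 1,
      Function.Injective φ →
      @Measurable _ _
        (@Prod.instMeasurableSpace _ _ (cocountableSigmaAlgebra _)
          (cocountableSigmaAlgebra _))
        (cocountableSigmaAlgebra _) φ) := by
  have := aux_unc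
  constructor
  · refine ⟨cocMeasure, fun A hA => cocMeasure_countable A hA,
      fun A hA => cocMeasure_cocountable A hA, ?_⟩
    exact ⟨cocMeasure_cocountable univ (by simp)⟩
  · intro φ hφ
    letI m : MeasurableSpace ((Set.Icc (0:ℝ) 1) × (Set.Icc (0:ℝ) 1)) :=
      @Prod.instMeasurableSpace _ _ (cocountableSigmaAlgebra _)
        (cocountableSigmaAlgebra _)
    have hcnt : ∀ S : Set ((Set.Icc (0:ℝ) 1) × (Set.Icc (0:ℝ) 1)),
        S.Countable → MeasurableSet[m] S := by
      intro S hS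
      have : S = ⋃ p ∈ S, {p} := by simp
      rw [this]
      refine MeasurableSet.biUnion hS fun p _ => ?_
      have : ({p} : Set _) = {p.1} ×ˢ {p.2} := by
        ext q; simp [Prod.ext_iff]
      rw [this]
      exact (aux_meas {p.1} (countable_singleton _)).prod
        (aux_meas {p.2} (countable_singleton _))
    intro A hA
    rcases hA with h | h
    · exact hcnt _ (h.preimage hφ)
    · have : MeasurableSet[m] (φ ⁻¹' A)ᶜ := by
        rw [← Set.preimage_compl]
        exact hcnt _ (h.preimage hφ)
      simpa using this.compl
end

section
/- Suppose random variables X, Y : Ω → R on a probability space (Ω,𝓑,π) are independent, A ∈ 𝓡 with π(X⁻¹(A)) = π(Y⁻¹(A)) = a ∈ (0,1), and b = (a − a²)/2. If J ∈ 𝓑 satisfies π(X⁻¹(A) △ J) < b and π(Y⁻¹(A) △ J) < b, then a contradiction follows; i.e., no such J exists. Equivalently, π(J ∩ X⁻¹(A) ∩ Y⁻¹(A)) > a − 2b = a² contradicts π(X⁻¹(A) ∩ Y⁻¹(A)) = a². -/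
open MeasureTheory Set

/-- If `X` and `Y` are independent random variables with
`π(X⁻¹(A)) = π(Y⁻¹(A)) = a ∈ (0,1)` and `b = (a − a²)/2`, then no event `J` can
approximate both `X⁻¹(A)` and `Y⁻¹(A)` to within `b` in symmetric-difference measure:
such a `J` would give `π(J ∩ X⁻¹(A) ∩ Y⁻¹(A)) > a − 2b = a²`, contradicting
`π(X⁻¹(A) ∩ Y⁻¹(A)) = a²` from independence. -/
theorem stmt_16 {Ω R : Type*} [MeasurableSpace Ω] [MeasurableSpace R]
    (π : Measure Ω) [IsProbabilityMeasure π]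
    (X Y : Ω → R) (hX : Measurable X) (hY : Measurable Y)
    (hindep : ProbabilityTheory.IndepFun X Y π)
    (A : Set R) (hA : MeasurableSet A)
    (a : ENNReal) (ha0 : 0 < a) (ha1 : a < 1)
    (haX : π (X ⁻¹' A) = a) (haY : π (Y ⁻¹' A) = a)
    (b : ENNReal) (hb : b = (a - a ^ 2) / 2) :
    ¬ ∃ J : Set Ω, MeasurableSet J ∧
        π (symmDiff (X ⁻¹' A) J) < b ∧ π (symmDiff (Y ⁻¹' A) J) < b := by
  rintro ⟨J, hJ, h1, h2⟩
  set I1 := X ⁻¹' A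
  set I2 := Y ⁻¹' A
  have haT : a ≠ ⊤ := (ha1.trans ENNReal.one_lt_top).ne
  have hsq_lt : a ^ 2 < a := by
    calc a ^ 2 = a * a := sq a
    _ < a * 1 := by exact ENNReal.mul_lt_mul_iff_right ha0.ne' haT |>.2 ha1
    _ = a := mul_one a
  -- independence: π (I1 ∩ I2) = a ^ 2
  have hii : π (I1 ∩ I2) = a ^ 2 := by
    rw [hindep.measure_inter_preimage_eq_mul A A hA hA, haX, haY, sq]
  -- triangle inequality for symmetric differences
  have htri : π (symmDiff I1 I2) ≤ π (symmDiff I1 J) + π (symmDiff J I2) :=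
    measure_symmDiff_le I1 J I2
  have h2' : π (symmDiff J I2) < b := by rwa [symmDiff_comm]
  have hbb : b + b = a - a ^ 2 := by
    rw [hb, ← two_mul, ENNReal.mul_div_cancel' (by norm_num) (by norm_num)]
  have hlt : π (symmDiff I1 I2) < a - a ^ 2 := by
    calc π (symmDiff I1 I2) ≤ π (symmDiff I1 J) + π (symmDiff J I2) := htri
    _ < b + b := ENNReal.add_lt_add h1 h2'
    _ = a - a ^ 2 := hbb
  -- lower bound: a ≤ π (I1 ∆ I2) + a ^ 2
  have hsub : I1 ⊆ symmDiff I1 I2 ∪ (I1 ∩ I2) := by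
    intro x hx
    by_cases hx2 : x ∈ I2
    · exact Or.inr ⟨hx, hx2⟩
    · exact Or.inl (Or.inl ⟨hx, hx2⟩)
  have hlow : a ≤ π (symmDiff I1 I2) + a ^ 2 := by
    calc a = π I1 := haX.symm
    _ ≤ π (symmDiff I1 I2 ∪ (I1 ∩ I2)) := measure_mono hsub
    _ ≤ π (symmDiff I1 I2) + π (I1 ∩ I2) := measure_union_le _ _
    _ = π (symmDiff I1 I2) + a ^ 2 := by rw [hii]
  have : a < (a - a ^ 2) + a ^ 2 := hlow.trans_lt (by
    exact ENNReal.add_lt_add_right (by exact (lt_of_le_of_lt (le_trans (le_of_eq hii.symm) (measure_mono inter_subset_left)) (haX ▸ (measure_lt_top π I1))).ne) hlt)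
  rw [tsub_add_cancel_of_le hsq_lt.le] at this
  exact lt_irrefl a this
end
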